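/- There exists k_0 ≥ 1 such that for every integer k ≥ k_0 the polynomial P_N^k has exactly N real roots, all simple, which can be labeled a_1^k, …, a_N^k so that −r_N < a_N^k < −r_{N−1} < a_{N−1}^k < ⋯ < −r_2 < a_2^k < −r_1 < a_1^k, and its remaining two roots form a simple conjugate pair of nonreal complex numbers. Moreover, for each 1 ≤ j ≤ N, a_j^k → a_j as k → ∞, where a_1 > a_2 > ⋯ > a_N are the N real roots of P_N. -/

import Mathlib

open Polynomial Complex Filter Finset

namespace S9

variable {N : ℕ}

noncomputable def gf (r b : Fin N → ℝ) (x : ℝ) : ℝ := ∑ i, b i / (x + r i)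

noncomputable def Gf (r b : Fin N → ℝ) (D ε x : ℝ) : ℝ := gf r b x - D - ε * x ^ 2

noncomputable def Pp (r b : Fin N → ℝ) (D ε : ℝ) : Polynomial ℝ :=
  (C D + C ε * X ^ 2) * ∏ j, (X + C (r j)) -
    ∑ i, C (b i) * ∏ j ∈ Finset.univ.erase i, (X + C (r j))

noncomputable def MM (b : Fin N → ℝ) (D : ℝ) : ℝ := (∑ i, b i) / D + 1

noncomputable def LL (r b : Fin N → ℝ) (D : ℝ) : ℝ := MM b D + ∑ i, r i

noncomputable def bmin (b : Fin N → ℝ) : ℝ :=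
  if h : N = 0 then 1 else Finset.univ.inf' ⟨⟨0, Nat.pos_of_ne_zero h⟩, Finset.mem_univ _⟩ b

noncomputable def kap (r b : Fin N → ℝ) (D : ℝ) : ℝ := bmin b / (2 * LL r b D ^ 2)

noncomputable def eps0 (r b : Fin N → ℝ) (D : ℝ) : ℝ := bmin b / (4 * LL r b D ^ 3)

noncomputable def uB (r b : Fin N → ℝ) (D : ℝ) (m : Fin N) : ℝ :=
  if _ : (m : ℕ) = 0 then MM b D
  else -r ⟨(m : ℕ) - 1, lt_of_le_of_lt (Nat.sub_le _ _) m.isLt⟩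

noncomputable def J (r b : Fin N → ℝ) (D : ℝ) (m : Fin N) : Set ℝ :=
  Set.Ioo (-(r m)) (uB r b D m)

section Basic

variable {r b : Fin N → ℝ} {D ε : ℝ}

lemma bmin_le (hN : 0 < N) (i : Fin N) : bmin b ≤ b i := by
  unfold bmin
  rw [dif_neg hN.ne']
  exact Finset.inf'_le _ (Finset.mem_univ i)

lemma bmin_pos (hb : ∀ i, 0 < b i) : 0 < bmin b := by
  unfold bmin
  split
  · norm_num
  · next h =>
    obtain ⟨i, -, hi⟩ := Finset.exists_mem_eq_inf' (⟨⟨0, Nat.pos_of_ne_zero h⟩, Finset.mem_univ _⟩ :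
      (Finset.univ : Finset (Fin N)).Nonempty) b
    rw [hi]; exact hb i

lemma MM_pos (hb : ∀ i, 0 < b i) (hD : 0 < D) : 0 < MM b D := by
  unfold MM
  have : 0 ≤ (∑ i, b i) / D := div_nonneg (Finset.sum_nonneg fun i _ => (hb i).le) hD.le
  linarith

lemma LL_pos (hr : ∀ i, 0 < r i) (hb : ∀ i, 0 < b i) (hD : 0 < D) : 0 < LL r b D := by
  unfold LL
  have h1 := MM_pos (b := b) hb hD
  have h2 : 0 ≤ ∑ i, r i := Finset.sum_nonneg fun i _ => (hr i).le
  linarith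

lemma kap_pos (hr : ∀ i, 0 < r i) (hb : ∀ i, 0 < b i) (hD : 0 < D) : 0 < kap r b D :=
  div_pos (bmin_pos hb) (by have := LL_pos hr hb hD; positivity)

lemma eps0_pos (hr : ∀ i, 0 < r i) (hb : ∀ i, 0 < b i) (hD : 0 < D) : 0 < eps0 r b D :=
  div_pos (bmin_pos hb) (by have := LL_pos hr hb hD; positivity)

end Basic

section Algebra

variable {r b : Fin N → ℝ} {D ε : ℝ}

lemma eval_Pp (x : ℝ) (hx : ∀ j, x + r j ≠ 0) :
    (Pp r b D ε).eval x = (∏ j, (x + r j)) * (-(Gf r b D ε x)) := by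
  have key : (∏ j, (x + r j)) * gf r b x
      = ∑ i, b i * ∏ j ∈ Finset.univ.erase i, (x + r j) := by
    unfold gf
    rw [Finset.mul_sum]
    refine Finset.sum_congr rfl fun i _ => ?_
    rw [← Finset.mul_prod_erase Finset.univ _ (Finset.mem_univ i)]
    field_simp [hx i]
  simp only [Pp, eval_sub, eval_mul, eval_add, eval_pow, eval_X, eval_C, eval_prod,
    eval_finset_sum]
  rw [← key]
  unfold Gf
  ring

lemma eval_Pp_neg_r (m : Fin N) :
    (Pp r b D ε).eval (-(r m)) = -(b m * ∏ j ∈ Finset.univ.erase m, (r j - r m)) := by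
  simp only [Pp, eval_sub, eval_mul, eval_add, eval_pow, eval_X, eval_C, eval_prod,
    eval_finset_sum]
  rw [Finset.prod_eq_zero (Finset.mem_univ m) (by ring), mul_zero, zero_sub]
  rw [Finset.sum_eq_single m]
  · congr 1
    congr 1
    exact Finset.prod_congr rfl fun j _ => by ring
  · intro i _ hi
    rw [Finset.prod_eq_zero (Finset.mem_erase.2 ⟨Ne.symm hi, Finset.mem_univ m⟩) (by ring),
      mul_zero]
  · intro h; exact absurd (Finset.mem_univ m) h

lemma prod_neg_sign (s : Finset (Fin N)) (f : Fin N → ℝ) (h : ∀ x ∈ s, f x < 0) :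
    0 < (-1 : ℝ) ^ s.card * ∏ x ∈ s, f x := by
  classical
  induction s using Finset.induction with
  | empty => simp
  | insert _ _ hx ih =>
    next a s =>
      rw [Finset.prod_insert hx, Finset.card_insert_of_notMem hx, pow_succ]
      have h1 := ih fun x hxs => h x (Finset.mem_insert_of_mem hxs)
      have h2 := h a (Finset.mem_insert_self a s)
      nlinarith

lemma s_sign (hrm : StrictMono r) (m : Fin N) :
    0 < (-1 : ℝ) ^ (m : ℕ) * ∏ j ∈ Finset.univ.erase m, (r j - r m) := by
  classical
  have hsplit : Finset.univ.erase m = Finset.Iio m ∪ Finset.Ioi m := by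
    ext j
    simp only [Finset.mem_erase, Finset.mem_univ, and_true, Finset.mem_union, Finset.mem_Iio,
      Finset.mem_Ioi]
    exact ⟨fun h => Ne.lt_or_gt h, fun h => h.elim (fun h => h.ne) (fun h => h.ne')⟩
  have hdisj : Disjoint (Finset.Iio m) (Finset.Ioi m) := by
    rw [Finset.disjoint_left]
    intro j hj hj'
    exact absurd (Finset.mem_Ioi.1 hj') (not_lt.2 (Finset.mem_Iio.1 hj).le)
  rw [hsplit, Finset.prod_union hdisj]
  have hpos : 0 < ∏ j ∈ Finset.Ioi m, (r j - r m) :=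
    Finset.prod_pos fun j hj => sub_pos.2 (hrm (Finset.mem_Ioi.1 hj))
  have hneg := prod_neg_sign (Finset.Iio m) (fun j => r j - r m)
    (fun j hj => sub_neg.2 (hrm (Finset.mem_Iio.1 hj)))
  rw [Fin.card_Iio] at hneg
  calc (0:ℝ) < ((-1 : ℝ) ^ (m:ℕ) * ∏ j ∈ Finset.Iio m, (r j - r m)) *
        ∏ j ∈ Finset.Ioi m, (r j - r m) := mul_pos hneg hpos
  _ = _ := by ring

lemma eval_Pp_neg_r_ne (hrm : StrictMono r) (hb : ∀ i, 0 < b i) (m : Fin N) :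
    (Pp r b D ε).eval (-(r m)) ≠ 0 := by
  rw [eval_Pp_neg_r]
  have h1 := s_sign hrm m
  have h2 : ∏ j ∈ Finset.univ.erase m, (r j - r m) ≠ 0 := by
    intro h; rw [h, mul_zero] at h1; exact lt_irrefl 0 h1
  have h3 := (hb m).ne'
  intro h
  rw [neg_eq_zero] at h
  rcases mul_eq_zero.1 h with h | h
  · exact h3 h
  · exact h2 h

lemma Pp_ne_zero (hN : 0 < N) (hrm : StrictMono r) (hb : ∀ i, 0 < b i) :
    Pp r b D ε ≠ 0 := by
  intro h
  have := eval_Pp_neg_r_ne (D := D) (ε := ε) hrm hb ⟨0, hN⟩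
  rw [h] at this
  simp at this

end Algebra

section Mono

variable {r b : Fin N → ℝ} {D ε : ℝ}

-- abstract anti step
lemma Gf_gap (hb : ∀ i, 0 < b i) (hε0 : 0 ≤ ε) (m : Fin N) (Lb : ℝ) (hLb : 0 < Lb)
    {x y : ℝ} (hxy : x < y)
    (hside : ∀ i, 0 < (x + r i) * (y + r i))
    (hmb : (x + r m) * (y + r m) ≤ Lb ^ 2)
    (habs : |x + y| ≤ 2 * Lb) :
    Gf r b D ε y + (b m / Lb ^ 2 - 2 * Lb * ε) * (y - x) ≤ Gf r b D ε x := by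
  have hne : ∀ i, x + r i ≠ 0 ∧ y + r i ≠ 0 := by
    intro i
    have := hside i
    constructor <;> intro h <;> rw [h] at this <;> simp at this
  have hterm : ∀ i, b i / (x + r i) - b i / (y + r i)
      = b i * (y - x) / ((x + r i) * (y + r i)) := by
    intro i
    field_simp [(hne i).1, (hne i).2]
    ring
  have hg : gf r b x - gf r b y = ∑ i, b i * (y - x) / ((x + r i) * (y + r i)) := by
    unfold gf
    rw [← Finset.sum_sub_distrib]
    exact Finset.sum_congr rfl fun i _ => hterm i
  have hnn : ∀ i ∈ Finset.univ, (0:ℝ) ≤ b i * (y - x) / ((x + r i) * (y + r i)) := by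
    intro i _
    exact div_nonneg (mul_nonneg (hb i).le (by linarith)) (hside i).le
  have hkey : b m * (y - x) / Lb ^ 2 ≤ gf r b x - gf r b y := by
    rw [hg]
    calc b m * (y - x) / Lb ^ 2 ≤ b m * (y - x) / ((x + r m) * (y + r m)) := by
          apply div_le_div_of_nonneg_left (mul_nonneg (hb m).le (by linarith)) (hside m) hmb
      _ ≤ _ := Finset.single_le_sum hnn (Finset.mem_univ m)
  have hq : -(2 * Lb * ε) * (y - x) ≤ ε * (y ^ 2 - x ^ 2) := by
    have h2 : -(2 * Lb) * (y - x) ≤ (x + y) * (y - x) := by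
      have : -(2 * Lb) ≤ x + y := by
        have := (abs_le.1 habs).1; linarith
      exact mul_le_mul_of_nonneg_right this (by linarith)
    have h3 : ε * (-(2 * Lb) * (y - x)) ≤ ε * ((x + y) * (y - x)) :=
      mul_le_mul_of_nonneg_left h2 hε0
    calc -(2 * Lb * ε) * (y - x) = ε * (-(2 * Lb) * (y - x)) := by ring
      _ ≤ ε * ((x + y) * (y - x)) := h3
      _ = ε * (y ^ 2 - x ^ 2) := by ring
  unfold Gf
  have expand : (gf r b x - D - ε * x ^ 2) - (gf r b y - D - ε * y ^ 2)
      = (gf r b x - gf r b y) + ε * (y ^ 2 - x ^ 2) := by ring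
  have : b m / Lb ^ 2 * (y - x) - 2 * Lb * ε * (y-x) ≤
      (gf r b x - D - ε * x ^ 2) - (gf r b y - D - ε * y ^ 2) := by
    rw [expand]
    have := hkey
    have h3 : b m * (y-x) / Lb ^ 2 = b m / Lb ^2 * (y-x) := by ring
    rw [h3] at this
    linarith [hq]
  linarith


lemma neg_r_lt_uB (hr : ∀ i, 0 < r i) (hrm : StrictMono r) (hb : ∀ i, 0 < b i) (hD : 0 < D)
    (m : Fin N) : -(r m) < uB r b D m := by
  unfold uB
  split
  · have := MM_pos hb hD
    have := hr m
    linarith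
  · next h =>
    have hlt : (⟨(m : ℕ) - 1, lt_of_le_of_lt (Nat.sub_le _ _) m.isLt⟩ : Fin N) < m := by
      rw [Fin.lt_def]
      simp only
      omega
    have := hrm hlt
    linarith

lemma mem_J_neg (hrm : StrictMono r) {m : Fin N} {x : ℝ} (hx : x ∈ J r b D m)
    {i : Fin N} (hi : (i : ℕ) < (m : ℕ)) : x + r i < 0 := by
  obtain ⟨_, hx2⟩ := hx
  have hm0 : (m : ℕ) ≠ 0 := by omega
  rw [uB, dif_neg hm0] at hx2
  have hle : r i ≤ r ⟨(m : ℕ) - 1, lt_of_le_of_lt (Nat.sub_le _ _) m.isLt⟩ := by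
    apply hrm.monotone
    rw [Fin.le_def]
    simp only
    omega
  linarith

lemma mem_J_pos (hrm : StrictMono r) {m : Fin N} {x : ℝ} (hx : x ∈ J r b D m)
    {i : Fin N} (hi : (m : ℕ) ≤ (i : ℕ)) : 0 < x + r i := by
  obtain ⟨hx1, _⟩ := hx
  have hle : r m ≤ r i := by
    apply hrm.monotone
    rwa [Fin.le_def]
  linarith

lemma mem_J_ne (hrm : StrictMono r) {m : Fin N} {x : ℝ} (hx : x ∈ J r b D m) (i : Fin N) :
    x + r i ≠ 0 := by
  rcases lt_or_ge (i : ℕ) (m : ℕ) with h | h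
  · exact (mem_J_neg hrm hx h).ne
  · exact (mem_J_pos hrm hx h).ne'

lemma mem_J_side (hrm : StrictMono r) {m : Fin N} {x y : ℝ} (hx : x ∈ J r b D m)
    (hy : y ∈ J r b D m) (i : Fin N) : 0 < (x + r i) * (y + r i) := by
  rcases lt_or_ge (i : ℕ) (m : ℕ) with h | h
  · exact mul_pos_of_neg_of_neg (mem_J_neg hrm hx h) (mem_J_neg hrm hy h)
  · exact mul_pos (mem_J_pos hrm hx h) (mem_J_pos hrm hy h)

lemma mem_J_add_le (hr : ∀ i, 0 < r i) (hrm : StrictMono r) (hb : ∀ i, 0 < b i) (hD : 0 < D)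
    {m : Fin N} {x : ℝ} (hx : x ∈ J r b D m) : x + r m ≤ LL r b D := by
  obtain ⟨_, hx2⟩ := hx
  have hMM := MM_pos hb hD
  have hrsum : r m ≤ ∑ i, r i := Finset.single_le_sum (fun i _ => (hr i).le) (Finset.mem_univ m)
  have hrs0 : 0 ≤ ∑ i, r i := Finset.sum_nonneg fun i _ => (hr i).le
  rw [uB] at hx2
  unfold LL
  split at hx2
  · linarith
  · have : r ⟨(m : ℕ) - 1, lt_of_le_of_lt (Nat.sub_le _ _) m.isLt⟩ > 0 := hr _
    linarith

lemma mem_J_abs (hr : ∀ i, 0 < r i) (hrm : StrictMono r) (hb : ∀ i, 0 < b i) (hD : 0 < D)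
    {m : Fin N} {x : ℝ} (hx : x ∈ J r b D m) : |x| ≤ LL r b D := by
  obtain ⟨hx1, hx2⟩ := hx
  have hMM := MM_pos hb hD
  have hrsum : r m ≤ ∑ i, r i := Finset.single_le_sum (fun i _ => (hr i).le) (Finset.mem_univ m)
  have hrs0 : 0 ≤ ∑ i, r i := Finset.sum_nonneg fun i _ => (hr i).le
  rw [abs_le]
  constructor
  · unfold LL; linarith
  · rw [uB] at hx2
    unfold LL
    split at hx2
    · linarith
    · have : r ⟨(m : ℕ) - 1, lt_of_le_of_lt (Nat.sub_le _ _) m.isLt⟩ > 0 := hr _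
      linarith

lemma J_ordered (hrm : StrictMono r) {m m' : Fin N} (h : m < m') {x y : ℝ}
    (hx : x ∈ J r b D m) (hy : y ∈ J r b D m') : y < x := by
  obtain ⟨hx1, _⟩ := hx
  obtain ⟨_, hy2⟩ := hy
  have hm0 : (m' : ℕ) ≠ 0 := by
    have := Fin.lt_def.1 h; omega
  rw [uB, dif_neg hm0] at hy2
  have hle : r m ≤ r ⟨(m' : ℕ) - 1, lt_of_le_of_lt (Nat.sub_le _ _) m'.isLt⟩ := by
    apply hrm.monotone
    rw [Fin.le_def]
    have := Fin.lt_def.1 h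
    simp only
    omega
  linarith


end Mono


section Anti

variable {r b : Fin N → ℝ} {D ε : ℝ}

lemma coeff_ge_kap (hN : 0 < N) (hr : ∀ i, 0 < r i) (hb : ∀ i, 0 < b i) (hD : 0 < D)
    (hε : ε ≤ eps0 r b D) (m : Fin N) :
    kap r b D ≤ b m / LL r b D ^ 2 - 2 * LL r b D * ε := by
  set L := LL r b D with hL
  have hL0 : 0 < L := LL_pos hr hb hD
  have hB0 : 0 < bmin b := bmin_pos hb
  have hbm := bmin_le (b := b) hN m
  have h1 : 2 * L * ε ≤ 2 * L * (bmin b / (4 * L ^ 3)) := by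
    apply mul_le_mul_of_nonneg_left hε (by positivity)
  have h2 : 2 * L * (bmin b / (4 * L ^ 3)) = bmin b / (2 * L ^ 2) := by
    field_simp
    ring
  have h3 : bmin b / L ^ 2 ≤ b m / L ^ 2 := by gcongr
  have h4 : bmin b / L ^ 2 - bmin b / (2 * L ^ 2) = bmin b / (2 * L ^ 2) := by
    field_simp
    ring
  unfold kap
  rw [← hL]
  linarith

lemma Gf_anti_J (hN : 0 < N) (hr : ∀ i, 0 < r i) (hrm : StrictMono r) (hb : ∀ i, 0 < b i)
    (hD : 0 < D) (hε0 : 0 ≤ ε) (hε : ε ≤ eps0 r b D) {m : Fin N} {x y : ℝ}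
    (hx : x ∈ J r b D m) (hy : y ∈ J r b D m) (hxy : x < y) :
    Gf r b D ε y + kap r b D * (y - x) ≤ Gf r b D ε x := by
  set L := LL r b D with hL
  have hL0 : 0 < L := LL_pos hr hb hD
  have hside := fun i => mem_J_side (D := D) hrm hx hy i
  have hmb : (x + r m) * (y + r m) ≤ L ^ 2 := by
    have h1 : 0 < x + r m := mem_J_pos hrm hx (le_refl _)
    have h2 : 0 < y + r m := mem_J_pos hrm hy (le_refl _)
    have h3 := mem_J_add_le hr hrm hb hD hx
    have h4 := mem_J_add_le hr hrm hb hD hy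
    nlinarith
  have habs : |x + y| ≤ 2 * L := by
    calc |x + y| ≤ |x| + |y| := abs_add_le x y
      _ ≤ 2 * L := by
          have := mem_J_abs hr hrm hb hD hx
          have := mem_J_abs hr hrm hb hD hy
          linarith
  have hgap := Gf_gap (D := D) hb hε0 m L hL0 hxy hside hmb habs
  have hco := coeff_ge_kap hN hr hb hD hε m
  have : kap r b D * (y - x) ≤ (b m / L ^ 2 - 2 * L * ε) * (y - x) :=
    mul_le_mul_of_nonneg_right hco (by linarith)
  linarith

lemma gf_lt_D (hr : ∀ i, 0 < r i) (hb : ∀ i, 0 < b i) (hD : 0 < D)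
    {x : ℝ} (hx : MM b D ≤ x) : gf r b x < D := by
  have hM := MM_pos hb hD
  have hx0 : 0 < x := lt_of_lt_of_le hM hx
  have h1 : gf r b x ≤ (∑ i, b i) / x := by
    unfold gf
    rw [Finset.sum_div]
    apply Finset.sum_le_sum
    intro i _
    apply div_le_div_of_nonneg_left (hb i).le hx0
    linarith [hr i]
  have h2 : (∑ i, b i) / x ≤ (∑ i, b i) / MM b D := by
    apply div_le_div_of_nonneg_left (Finset.sum_nonneg fun i _ => (hb i).le) hM hx
  have h3 : (∑ i, b i) / MM b D < D := by
    rw [div_lt_iff₀ hM]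
    have : D * MM b D = (∑ i, b i) + D := by
      unfold MM
      field_simp
    rw [this]
    linarith
  linarith

lemma Gf_neg_of_ge (hr : ∀ i, 0 < r i) (hb : ∀ i, 0 < b i) (hD : 0 < D) (hε0 : 0 ≤ ε)
    {x : ℝ} (hx : MM b D ≤ x) : Gf r b D ε x < 0 := by
  have h1 := gf_lt_D (r := r) hr hb hD hx
  have h2 : 0 ≤ ε * x ^ 2 := mul_nonneg hε0 (sq_nonneg x)
  unfold Gf
  linarith

lemma Gf_neg_of_all_neg (hN : 0 < N) (hb : ∀ i, 0 < b i) (hD : 0 < D) (hε0 : 0 ≤ ε)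
    {x : ℝ} (hx : ∀ i, x + r i < 0) : Gf r b D ε x < 0 := by
  have h1 : gf r b x < 0 := by
    unfold gf
    apply Finset.sum_neg
    · intro i _
      exact div_neg_of_pos_of_neg (hb i) (hx i)
    · exact ⟨⟨0, hN⟩, Finset.mem_univ _⟩
  have h2 : 0 ≤ ε * x ^ 2 := mul_nonneg hε0 (sq_nonneg x)
  unfold Gf
  linarith

lemma Gf_eq_zero_of_root (hrm : StrictMono r) (hb : ∀ i, 0 < b i)
    {x : ℝ} (hne : ∀ j, x + r j ≠ 0) (hroot : (Pp r b D ε).IsRoot x) :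
    Gf r b D ε x = 0 := by
  have := hroot
  rw [IsRoot, eval_Pp x hne] at this
  have hprod : (∏ j, (x + r j)) ≠ 0 := Finset.prod_ne_zero_iff.2 fun j _ => hne j
  rcases mul_eq_zero.1 this with h | h
  · exact absurd h hprod
  · linarith [neg_eq_zero.1 h]

lemma root_ne_pole (hrm : StrictMono r) (hb : ∀ i, 0 < b i)
    {x : ℝ} (hroot : (Pp r b D ε).IsRoot x) (j : Fin N) : x + r j ≠ 0 := by
  intro h
  have hx : x = -(r j) := by linarith
  rw [hx] at hroot
  exact eval_Pp_neg_r_ne (D := D) (ε := ε) hrm hb j hroot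

lemma root_mem_J (hN : 0 < N) (hr : ∀ i, 0 < r i) (hrm : StrictMono r) (hb : ∀ i, 0 < b i)
    (hD : 0 < D) (hε0 : 0 ≤ ε) {x : ℝ} (hroot : (Pp r b D ε).IsRoot x) :
    ∃ m, x ∈ J r b D m := by
  have hne : ∀ j, x + r j ≠ 0 := root_ne_pole hrm hb hroot
  have hG : Gf r b D ε x = 0 := Gf_eq_zero_of_root hrm hb hne hroot
  set T : Finset (Fin N) := Finset.univ.filter (fun i => 0 < x + r i) with hT
  have hTne : T.Nonempty := by
    by_contra hempty
    rw [Finset.not_nonempty_iff_eq_empty] at hempty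
    have hallneg : ∀ i, x + r i < 0 := by
      intro i
      rcases lt_trichotomy (x + r i) 0 with h | h | h
      · exact h
      · exact absurd h (hne i)
      · exfalso
        have : i ∈ T := by rw [hT]; simp [h]
        rw [hempty] at this
        simp at this
    exact absurd hG (Gf_neg_of_all_neg hN hb hD hε0 hallneg).ne
  set m := T.min' hTne with hm
  have hmT : m ∈ T := T.min'_mem hTne
  have hmx : 0 < x + r m := by
    rw [hT] at hmT
    simpa using hmT
  refine ⟨m, ?_, ?_⟩
  · show -(r m) < x
    linarith
  · unfold uB
    split
    · next h0 =>
      by_contra hge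
      push_neg at hge
      exact absurd hG (Gf_neg_of_ge hr hb hD hε0 hge).ne
    · next h0 =>
      set m1 : Fin N := ⟨(m : ℕ) - 1, lt_of_le_of_lt (Nat.sub_le _ _) m.isLt⟩ with hm1
      have hm1m : m1 < m := by
        rw [Fin.lt_def]
        simp only [hm1]
        omega
      have hm1T : m1 ∉ T := fun hmem => absurd (T.min'_le m1 hmem) (not_le.2 hm1m)
      have : ¬(0 < x + r m1) := by
        intro h
        exact hm1T (by rw [hT]; simp [h])
      have hne1 := hne m1
      have : x + r m1 < 0 := by
        rcases lt_trichotomy (x + r m1) 0 with h | h | h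
        · exact h
        · exact absurd h hne1
        · exact absurd h this
      linarith

end Anti

section Roots

variable {r b : Fin N → ℝ} {D ε : ℝ}

lemma exists_root_Ioo (p : Polynomial ℝ) {α β : ℝ} (hαβ : α < β)
    (hsign : p.eval α * p.eval β < 0) : ∃ x ∈ Set.Ioo α β, p.IsRoot x := by
  have hcont : ContinuousOn (fun x => p.eval x) (Set.Icc α β) := p.continuous.continuousOn
  rcases mul_neg_iff.1 hsign with ⟨ha, hb⟩ | ⟨ha, hb⟩
  · have h0 : (0:ℝ) ∈ Set.Ioo (p.eval β) (p.eval α) := ⟨hb, ha⟩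
    obtain ⟨x, hx, hfx⟩ := intermediate_value_Ioo' hαβ.le hcont h0
    exact ⟨x, hx, hfx⟩
  · have h0 : (0:ℝ) ∈ Set.Ioo (p.eval α) (p.eval β) := ⟨ha, hb⟩
    obtain ⟨x, hx, hfx⟩ := intermediate_value_Ioo hαβ.le hcont h0
    exact ⟨x, hx, hfx⟩

lemma exists_root_J (hN : 0 < N) (hr : ∀ i, 0 < r i) (hrm : StrictMono r) (hb : ∀ i, 0 < b i)
    (hD : 0 < D) (hε0 : 0 ≤ ε) (m : Fin N) :
    ∃ x ∈ J r b D m, (Pp r b D ε).IsRoot x := by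
  have hlt : -(r m) < uB r b D m := neg_r_lt_uB hr hrm hb hD m
  apply exists_root_Ioo _ hlt
  have hm := s_sign hrm m
  by_cases h0 : (m : ℕ) = 0
  · have huB : uB r b D m = MM b D := by unfold uB; rw [dif_pos h0]
    have h1 : (Pp r b D ε).eval (-(r m)) < 0 := by
      rw [eval_Pp_neg_r]
      rw [h0, pow_zero, one_mul] at hm
      have := hb m
      nlinarith
    have h2 : 0 < (Pp r b D ε).eval (uB r b D m) := by
      rw [huB]
      have hMM := MM_pos hb hD
      have hne : ∀ j, MM b D + r j ≠ 0 := fun j => by have := hr j; positivity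
      rw [eval_Pp _ hne]
      apply mul_pos
      · exact Finset.prod_pos fun j _ => by have := hr j; positivity
      · have := Gf_neg_of_ge (r := r) (ε := ε) hr hb hD hε0 (le_refl (MM b D))
        linarith
    nlinarith
  · set m1 : Fin N := ⟨(m : ℕ) - 1, lt_of_le_of_lt (Nat.sub_le _ _) m.isLt⟩ with hm1
    have huB : uB r b D m = -(r m1) := by unfold uB; rw [dif_neg h0]
    rw [huB, eval_Pp_neg_r, eval_Pp_neg_r]
    have hm1s := s_sign hrm m1
    obtain ⟨n, hn⟩ : ∃ n, (m : ℕ) = n + 1 := ⟨(m : ℕ) - 1, by omega⟩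
    have hval : (m1 : ℕ) = n := by simp only [hm1]; omega
    have hpow : ((-1:ℝ) ^ n) ^ 2 = 1 := by
      rw [← pow_mul, mul_comm, pow_mul]
      norm_num
    have hflip : (-1:ℝ) ^ (m : ℕ) = -(-1:ℝ) ^ n := by
      rw [hn, pow_succ]
      ring
    rw [hflip] at hm
    rw [hval] at hm1s
    have hprodneg : (∏ j ∈ Finset.univ.erase m, (r j - r m)) *
        (∏ j ∈ Finset.univ.erase m1, (r j - r m1)) < 0 := by
      nlinarith [mul_pos hm hm1s, hpow]
    nlinarith [mul_pos (hb m) (hb m1), hprodneg]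

lemma root_unique_J (hN : 0 < N) (hr : ∀ i, 0 < r i) (hrm : StrictMono r) (hb : ∀ i, 0 < b i)
    (hD : 0 < D) (hε0 : 0 ≤ ε) (hε : ε ≤ eps0 r b D) {m : Fin N} {x y : ℝ}
    (hx : x ∈ J r b D m) (hy : y ∈ J r b D m)
    (hrx : (Pp r b D ε).IsRoot x) (hry : (Pp r b D ε).IsRoot y) : x = y := by
  have hGx : Gf r b D ε x = 0 := Gf_eq_zero_of_root hrm hb (mem_J_ne hrm hx) hrx
  have hGy : Gf r b D ε y = 0 := Gf_eq_zero_of_root hrm hb (mem_J_ne hrm hy) hry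
  have hk := kap_pos (b := b) hr hb hD
  rcases lt_trichotomy x y with h | h | h
  · have := Gf_anti_J hN hr hrm hb hD hε0 hε hx hy h
    nlinarith
  · exact h
  · have := Gf_anti_J hN hr hrm hb hD hε0 hε hy hx h
    nlinarith

lemma mult_one (hN : 0 < N) (hr : ∀ i, 0 < r i) (hrm : StrictMono r) (hb : ∀ i, 0 < b i)
    (hD : 0 < D) (hε0 : 0 ≤ ε) (hε : ε ≤ eps0 r b D) {m : Fin N} {x₀ : ℝ}
    (hx : x₀ ∈ J r b D m) (hroot : (Pp r b D ε).IsRoot x₀) :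
    rootMultiplicity x₀ (Pp r b D ε) = 1 := by
  have hP0 : Pp r b D ε ≠ 0 := Pp_ne_zero hN hrm hb
  have hk := kap_pos (b := b) hr hb hD
  obtain ⟨Q, hQ⟩ := dvd_iff_isRoot.2 hroot
  have hQeval : ∀ y : ℝ, (Pp r b D ε).eval y = (y - x₀) * Q.eval y := by
    intro y
    rw [hQ]
    simp [eval_mul]
  have hGx : Gf r b D ε x₀ = 0 := Gf_eq_zero_of_root hrm hb (mem_J_ne hrm hx) hroot
  have hβ : x₀ < uB r b D m := hx.2
  have hQx0 : Q.eval x₀ ≠ 0 := by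
    have hev : ∀ᶠ y in nhdsWithin x₀ (Set.Ioi x₀), y ∈ Set.Ioo x₀ (uB r b D m) :=
      Ioo_mem_nhdsGT_of_mem ⟨le_refl x₀, hβ⟩
    have hbound : ∀ᶠ y in nhdsWithin x₀ (Set.Ioi x₀),
        kap r b D * |∏ j, (y + r j)| ≤ |Q.eval y| := by
      filter_upwards [hev] with y hy
      have hyJ : y ∈ J r b D m := ⟨lt_trans hx.1 hy.1, hy.2⟩
      have hanti := Gf_anti_J hN hr hrm hb hD hε0 hε hx hyJ hy.1
      rw [hGx] at hanti
      have hGy : Gf r b D ε y ≤ -(kap r b D * (y - x₀)) := by linarith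
      have h1 : (Pp r b D ε).eval y = (∏ j, (y + r j)) * (-(Gf r b D ε y)) :=
        eval_Pp y (mem_J_ne hrm hyJ)
      have h2 : |(Pp r b D ε).eval y| = (y - x₀) * |Q.eval y| := by
        rw [hQeval y, abs_mul, abs_of_pos (by linarith [hy.1] : (0:ℝ) < y - x₀)]
      have h3 : |(Pp r b D ε).eval y| = |∏ j, (y + r j)| * |Gf r b D ε y| := by
        rw [h1, abs_mul, abs_neg]
      have h4 : kap r b D * (y - x₀) ≤ |Gf r b D ε y| := by
        rw [abs_of_nonpos (by nlinarith [hy.1])]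
        linarith
      have h5 : kap r b D * (y - x₀) * |∏ j, (y + r j)| ≤ (y - x₀) * |Q.eval y| := by
        rw [← h2, h3]
        calc kap r b D * (y - x₀) * |∏ j, (y + r j)|
            ≤ |Gf r b D ε y| * |∏ j, (y + r j)| :=
              mul_le_mul_of_nonneg_right h4 (abs_nonneg _)
          _ = |∏ j, (y + r j)| * |Gf r b D ε y| := by ring
      have hy0 : 0 < y - x₀ := by linarith [hy.1]
      have h6 : kap r b D * (y - x₀) * |∏ j, (y + r j)|
          = (y - x₀) * (kap r b D * |∏ j, (y + r j)|) := by ring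
      rw [h6] at h5
      exact le_of_mul_le_mul_left (by linarith) hy0
    have ht1 : Tendsto (fun y => kap r b D * |∏ j, (y + r j)|) (nhdsWithin x₀ (Set.Ioi x₀))
        (nhds (kap r b D * |∏ j, (x₀ + r j)|)) := by
      apply Tendsto.mono_left _ nhdsWithin_le_nhds
      have hc : Continuous fun y : ℝ => kap r b D * |∏ j, (y + r j)| :=
        continuous_const.mul
          ((continuous_finset_prod _ fun j _ => continuous_id.add continuous_const).abs)
      exact hc.tendsto x₀
    have ht2 : Tendsto (fun y => |Q.eval y|) (nhdsWithin x₀ (Set.Ioi x₀))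
        (nhds (|Q.eval x₀|)) := by
      apply Tendsto.mono_left _ nhdsWithin_le_nhds
      exact (Q.continuous.abs).tendsto x₀
    have hle : kap r b D * |∏ j, (x₀ + r j)| ≤ |Q.eval x₀| :=
      le_of_tendsto_of_tendsto ht1 ht2 hbound
    have hprod : (∏ j, (x₀ + r j)) ≠ 0 := Finset.prod_ne_zero_iff.2 fun j _ => mem_J_ne hrm hx j
    have : 0 < kap r b D * |∏ j, (x₀ + r j)| := mul_pos hk (abs_pos.2 hprod)
    intro h
    rw [h, abs_zero] at hle
    linarith
  have h1 : 1 ≤ rootMultiplicity x₀ (Pp r b D ε) := (rootMultiplicity_pos hP0).2 hroot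
  have h2 : rootMultiplicity x₀ (Pp r b D ε) < 2 := by
    by_contra hge
    push_neg at hge
    have hdvd : (X - C x₀) ^ 2 ∣ Pp r b D ε :=
      dvd_trans (pow_dvd_pow _ hge) (pow_rootMultiplicity_dvd (Pp r b D ε) x₀)
    obtain ⟨R, hR⟩ := hdvd
    have hcancel : Q = (X - C x₀) * R := by
      have hXne : (X - C x₀ : Polynomial ℝ) ≠ 0 := X_sub_C_ne_zero x₀
      apply mul_left_cancel₀ hXne
      rw [← hQ, hR]
      ring
    have : Q.eval x₀ = 0 := by
      rw [hcancel]
      simp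
    exact hQx0 this
  omega

end Roots

section RootsMultiset

variable {r b : Fin N → ℝ} {D ε : ℝ}

lemma rho_strictAnti (hrm : StrictMono r) {ρ : Fin N → ℝ}
    (hρ : ∀ m, ρ m ∈ J r b D m) : StrictAnti ρ := by
  intro i j hij
  exact J_ordered hrm hij (hρ i) (hρ j)

lemma roots_Pp (hN : 0 < N) (hr : ∀ i, 0 < r i) (hrm : StrictMono r) (hb : ∀ i, 0 < b i)
    (hD : 0 < D) (hε0 : 0 ≤ ε) (hε : ε ≤ eps0 r b D) (ρ : Fin N → ℝ)
    (hρ : ∀ m, ρ m ∈ J r b D m ∧ (Pp r b D ε).IsRoot (ρ m)) :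
    (Pp r b D ε).roots = Multiset.map ρ Finset.univ.val := by
  classical
  have hinj : Function.Injective ρ := (rho_strictAnti hrm fun m => (hρ m).1).injective
  apply Multiset.ext.2
  intro x
  rw [count_roots]
  by_cases hx : ∃ j, ρ j = x
  · obtain ⟨j, hj⟩ := hx
    subst hj
    rw [mult_one hN hr hrm hb hD hε0 hε (hρ j).1 (hρ j).2]
    rw [Multiset.count_map_eq_count' ρ _ hinj]
    exact (Multiset.count_eq_one_of_mem Finset.univ.nodup (Finset.mem_univ j)).symm
  · push_neg at hx
    have h1 : Multiset.count x (Multiset.map ρ Finset.univ.val) = 0 := by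
      rw [Multiset.count_eq_zero]
      intro hmem
      obtain ⟨j, _, hj⟩ := Multiset.mem_map.1 hmem
      exact hx j hj
    rw [h1]
    apply rootMultiplicity_eq_zero
    intro hroot
    obtain ⟨m, hm⟩ := root_mem_J hN hr hrm hb hD hε0 hroot
    exact hx m (root_unique_J hN hr hrm hb hD hε0 hε (hρ m).1 hm (hρ m).2 hroot)

lemma natDegree_Pp (hN : 0 < N) (hε : ε ≠ 0) : (Pp r b D ε).natDegree = N + 2 := by
  classical
  have hQm : (∏ j : Fin N, (X + C (r j))).Monic :=
    monic_prod_of_monic _ _ fun j _ => monic_X_add_C (r j)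
  have hQdeg : (∏ j : Fin N, (X + C (r j))).natDegree = N := by
    rw [natDegree_prod _ _ fun j _ => (monic_X_add_C (r j)).ne_zero]
    simp [natDegree_X_add_C]
  have hsplit : Pp r b D ε = C ε * (X ^ 2 * ∏ j, (X + C (r j)))
      + (C D * ∏ j, (X + C (r j))
        - ∑ i, C (b i) * ∏ j ∈ Finset.univ.erase i, (X + C (r j))) := by
    unfold Pp
    ring
  have hlead : (C ε * (X ^ 2 * ∏ j, (X + C (r j)))).natDegree = N + 2 := by
    rw [natDegree_C_mul hε]
    have hm2 : (X ^ 2 * ∏ j : Fin N, (X + C (r j))).Monic := (monic_X_pow 2).mul hQm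
    rw [natDegree_mul (monic_X_pow 2).ne_zero hQm.ne_zero, natDegree_X_pow, hQdeg]
    omega
  have hsmall : (C D * ∏ j, (X + C (r j))
      - ∑ i, C (b i) * ∏ j ∈ Finset.univ.erase i, (X + C (r j))).natDegree ≤ N := by
    apply le_trans (natDegree_sub_le _ _)
    apply max_le
    · exact le_trans (natDegree_C_mul_le _ _) hQdeg.le
    · apply natDegree_sum_le_of_forall_le
      intro i _
      apply le_trans (natDegree_C_mul_le _ _)
      apply le_trans (natDegree_prod_le _ _)
      calc ∑ j ∈ Finset.univ.erase i, (X + C (r j)).natDegree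
          = ∑ j ∈ Finset.univ.erase i, 1 := by
            exact Finset.sum_congr rfl fun j _ => natDegree_X_add_C (r j)
        _ ≤ N := by
            rw [Finset.sum_const, smul_eq_mul, mul_one]
            exact le_trans (Finset.card_erase_le) (by simp)
  rw [hsplit, natDegree_add_eq_left_of_natDegree_lt (by omega : _ < _), hlead]

end RootsMultiset

section ComplexStep

lemma complex_step (n : ℕ) (p : Polynomial ℝ) (hp0 : p ≠ 0) (hdeg : p.natDegree = n + 2)
    (ρ : Fin n → ℝ) (hinj : Function.Injective ρ)
    (hroots : p.roots = Multiset.map ρ Finset.univ.val) :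
    ∃ z : ℂ, z.im ≠ 0 ∧
      (p.map (algebraMap ℝ ℂ)).roots =
        Multiset.map (fun j => ((ρ j : ℝ) : ℂ)) Finset.univ.val +
          {(z.re : ℂ) + (z.im : ℂ) * I, (z.re : ℂ) - (z.im : ℂ) * I} ∧
      (p.map (algebraMap ℝ ℂ)).roots.Nodup := by
  classical
  set q : Polynomial ℂ := p.map (algebraMap ℝ ℂ) with hq
  have halg : (algebraMap ℝ ℂ) = Complex.ofReal := rfl
  have hofinj : Function.Injective (algebraMap ℝ ℂ) := fun x y h => by
    rw [halg] at h; exact_mod_cast h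
  have hq0 : q ≠ 0 := by
    rw [hq]
    exact (Polynomial.map_ne_zero_iff hofinj).2 hp0
  have hqdeg : q.natDegree = n + 2 := by
    rw [hq, natDegree_map, hdeg]
  have hcard : Multiset.card q.roots = n + 2 := by
    rw [← hqdeg]
    exact (splits_iff_card_roots).1 (IsAlgClosed.splits q)
  -- counts of real points
  have hRMq : ∀ x : ℝ, rootMultiplicity ((x : ℝ) : ℂ) q = rootMultiplicity x p := by
    intro x
    rw [hq, ← halg]
    exact (eq_rootMultiplicity_map hofinj x).symm
  have hcount_real : ∀ x : ℝ, Multiset.count ((x : ℝ) : ℂ) q.roots = Multiset.count x p.roots := by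
    intro x
    rw [count_roots, count_roots, hRMq]
  -- the mapped multiset
  set mreal : Multiset ℂ := Multiset.map Complex.ofReal p.roots with hmr
  have hcount_mreal : ∀ x : ℝ, Multiset.count ((x : ℝ) : ℂ) mreal = Multiset.count x p.roots := by
    intro x
    rw [hmr]
    exact Multiset.count_map_eq_count' _ _ (fun x y h => by exact_mod_cast h) x
  have hcount_mreal_nonreal : ∀ z : ℂ, z.im ≠ 0 → Multiset.count z mreal = 0 := by
    intro z hz
    rw [Multiset.count_eq_zero]
    intro hmem
    obtain ⟨x, _, hx⟩ := Multiset.mem_map.1 hmem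
    rw [← hx] at hz
    simp at hz
  have hle : mreal ≤ q.roots := by
    rw [Multiset.le_iff_count]
    intro z
    by_cases hz : z.im = 0
    · have hzre : ((z.re : ℝ) : ℂ) = z := Complex.ext (by simp) (by simp [hz])
      rw [← hzre, hcount_mreal, hcount_real]
    · rw [hcount_mreal_nonreal z hz]
      exact Nat.zero_le _
  set R : Multiset ℂ := q.roots - mreal with hR
  have hsum : q.roots = mreal + R := by
    rw [hR, add_comm]
    exact (tsub_add_cancel_of_le hle).symm
  have hmreal_card : Multiset.card mreal = n := by
    rw [hmr, Multiset.card_map, hroots, Multiset.card_map]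
    simp
  have hRcard : Multiset.card R = 2 := by
    have := congrArg Multiset.card hsum
    rw [hcard, Multiset.card_add, hmreal_card] at this
    omega
  have hRreal : ∀ x : ℝ, Multiset.count ((x : ℝ) : ℂ) R = 0 := by
    intro x
    rw [hR, Multiset.count_sub, hcount_mreal, hcount_real]
    omega
  have hRnonreal : ∀ z : ℂ, z ∈ R → z.im ≠ 0 := by
    intro z hzR hz
    have hzre : ((z.re : ℝ) : ℂ) = z := Complex.ext (by simp) (by simp [hz])
    have h1 : 1 ≤ Multiset.count z R := Multiset.one_le_count_iff_mem.2 hzR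
    rw [← hzre, hRreal] at h1
    omega
  -- conjugation invariance
  have hqconj : q.map (starRingEnd ℂ) = q := by
    rw [hq, Polynomial.map_map]
    congr 1
    ext x
    simp [halg, Complex.conj_ofReal]
  have hconj_count : ∀ z : ℂ, Multiset.count ((starRingEnd ℂ) z) q.roots
      = Multiset.count z q.roots := by
    intro z
    rw [count_roots, count_roots]
    have := eq_rootMultiplicity_map (p := q) (RingHom.injective (starRingEnd ℂ)) z
    rw [hqconj] at this
    exact this.symm
  -- extract z
  obtain ⟨z, hzR⟩ := Multiset.card_pos_iff_exists_mem.1 (by omega : 0 < Multiset.card R)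
  have hzim : z.im ≠ 0 := hRnonreal z hzR
  have hzbar_count : Multiset.count ((starRingEnd ℂ) z) R = Multiset.count z R := by
    rw [hR, Multiset.count_sub, Multiset.count_sub, hconj_count]
    congr 1
    rw [hcount_mreal_nonreal _ hzim, hcount_mreal_nonreal _ (by simpa using hzim : ((starRingEnd ℂ) z).im ≠ 0)]
  have hzne : (starRingEnd ℂ) z ≠ z := by
    intro h
    have := congrArg Complex.im h
    simp at this
    exact hzim (by linarith)
  have hpair_le : ({z, (starRingEnd ℂ) z} : Multiset ℂ) ≤ R := by
    rw [Multiset.le_iff_count]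
    intro w
    have hcz : 1 ≤ Multiset.count z R := Multiset.one_le_count_iff_mem.2 hzR
    rw [show ({z, (starRingEnd ℂ) z} : Multiset ℂ) = z ::ₘ {(starRingEnd ℂ) z} from rfl,
      Multiset.count_cons, Multiset.count_singleton]
    by_cases hwz : w = z
    · rw [if_pos hwz, if_neg (by rw [hwz]; exact fun h => hzne h.symm)]
      rw [hwz]
      omega
    · rw [if_neg hwz]
      by_cases hwzb : w = (starRingEnd ℂ) z
      · rw [if_pos hwzb, hwzb, hzbar_count]
        omega
      · rw [if_neg hwzb]
        omega
  have hReq : R = {z, (starRingEnd ℂ) z} := by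
    symm
    apply Multiset.eq_of_le_of_card_le hpair_le
    rw [hRcard]
    rfl
  have hpair : ({z, (starRingEnd ℂ) z} : Multiset ℂ)
      = {(z.re : ℂ) + (z.im : ℂ) * I, (z.re : ℂ) - (z.im : ℂ) * I} := by
    have hz1 : (z.re : ℂ) + (z.im : ℂ) * I = z := Complex.re_add_im z
    have hz2 : (z.re : ℂ) - (z.im : ℂ) * I = (starRingEnd ℂ) z := by
      apply Complex.ext <;> simp
    rw [hz1, hz2]
  refine ⟨z, hzim, ?_, ?_⟩
  · rw [hsum, hReq, hmr, hroots, Multiset.map_map, hpair]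
    rfl
  · rw [Multiset.nodup_iff_count_le_one]
    intro w
    have hcw : Multiset.count w q.roots = Multiset.count w mreal + Multiset.count w R := by
      rw [hsum, Multiset.count_add]
    by_cases hw : w.im = 0
    · have hwre : ((w.re : ℝ) : ℂ) = w := Complex.ext (by simp) (by simp [hw])
      have hR0 : Multiset.count w R = 0 := by rw [← hwre, hRreal]
      have hm1 : Multiset.count w mreal ≤ 1 := by
        rw [← hwre, hcount_mreal, hroots]
        apply Multiset.nodup_iff_count_le_one.1
        exact Multiset.Nodup.map hinj Finset.univ.nodup
      omega
    · have hm0 : Multiset.count w mreal = 0 := hcount_mreal_nonreal w hw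
      have hR1 : Multiset.count w R ≤ 1 := by
        rw [hReq, show ({z, (starRingEnd ℂ) z} : Multiset ℂ) = z ::ₘ {(starRingEnd ℂ) z} from rfl,
          Multiset.count_cons, Multiset.count_singleton]
        by_cases h1 : w = z
        · rw [if_pos h1, if_neg (by rw [h1]; exact fun h => hzne h.symm)]
        · rw [if_neg h1]
          split <;> omega
      omega

end ComplexStep

section Converge

lemma epsk_lt (c : ℝ) (hc : 0 < c) :
    ∃ K : ℕ, 1 ≤ K ∧ ∀ k : ℕ, K ≤ k → ((2 * (k : ℝ) - 1) ^ 2)⁻¹ < c := by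
  refine ⟨⌈1 / c⌉₊ + 1, by omega, fun k hk => ?_⟩
  have hk1 : 1 ≤ k := by omega
  have hkr : (1 : ℝ) ≤ (k : ℝ) := by exact_mod_cast hk1
  have hkK : (⌈1 / c⌉₊ + 1 : ℝ) ≤ (k : ℝ) := by exact_mod_cast hk
  have hceil : 1 / c ≤ (⌈1 / c⌉₊ : ℝ) := Nat.le_ceil _
  have h2 : (0 : ℝ) < 2 * (k : ℝ) - 1 := by linarith
  have hsq : 1 / c < (2 * (k : ℝ) - 1) ^ 2 := by nlinarith
  have h3 : (0 : ℝ) < (2 * (k : ℝ) - 1) ^ 2 := by positivity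
  rw [← one_div, div_lt_iff₀ h3]
  rw [div_lt_iff₀ hc] at hsq
  nlinarith

lemma label_eq {n : ℕ} {ρ α : Fin n → ℝ} (hρ : StrictAnti ρ) (hα : StrictAnti α)
    (hrange : ∀ x, (∃ i, ρ i = x) ↔ (∃ i, α i = x)) : ρ = α := by
  apply (StrictAnti.range_inj hρ hα).1
  ext x
  simpa only [Set.mem_range] using hrange x

end Converge

end S9

set_option maxHeartbeats 1000000 in
open S9 in
/-- There exists `k₀ ≥ 1` such that for every `k ≥ k₀`, `P_N^k` has exactly
`N` real roots, all simple, which can be labeled so that they interlace the `-r j`, and its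
remaining two roots form a simple conjugate pair of nonreal complex numbers. Moreover each
`a_j^k → a_j` as `k → ∞`, where `a_1 > ⋯ > a_N` are the `N` real roots of `P_N`. -/
theorem stmt_9 (N : ℕ) (hN : 0 < N) (r b : Fin N → ℝ)
    (hr : ∀ i, 0 < r i) (hrm : StrictMono r) (hb : ∀ i, 0 < b i)
    (D : ℝ) (hD : 0 < D)
    (P : Polynomial ℝ)
    (hP : P = C D * ∏ j, (X + C (r j)) -
      ∑ i, C (b i) * ∏ j ∈ Finset.univ.erase i, (X + C (r j)))
    (Pk : ℕ → Polynomial ℝ)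
    (hPk : ∀ k : ℕ, Pk k =
      (C D + C (((2 * (k : ℝ) - 1) ^ 2)⁻¹) * X ^ 2) * ∏ j, (X + C (r j)) -
      ∑ i, C (b i) * ∏ j ∈ Finset.univ.erase i, (X + C (r j)))
    (a : Fin N → ℝ) (haanti : StrictAnti a)
    (haroots : P.roots = Multiset.map a Finset.univ.val) :
    ∃ k₀ : ℕ, 1 ≤ k₀ ∧ ∃ A : ℕ → Fin N → ℝ,
      (∀ k : ℕ, k₀ ≤ k →
        (∀ j, -(r j) < A k j) ∧
        (∀ j : Fin N, ∀ h : (j : ℕ) + 1 < N, A k ⟨(j : ℕ) + 1, h⟩ < -(r j)) ∧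
        (∃ p q : ℝ, q ≠ 0 ∧
          ((Pk k).map (algebraMap ℝ ℂ)).roots =
            Multiset.map (fun j => ((A k j : ℝ) : ℂ)) Finset.univ.val +
              {(p : ℂ) + (q : ℂ) * I, (p : ℂ) - (q : ℂ) * I} ∧
          ((Pk k).map (algebraMap ℝ ℂ)).roots.Nodup)) ∧
      (∀ j, Tendsto (fun k => A k j) atTop (nhds (a j))) := by
  classical
  have heps0 : 0 < eps0 r b D := eps0_pos hr hb hD
  have hkappos : 0 < kap r b D := kap_pos hr hb hD
  have hL0 : 0 < LL r b D := LL_pos hr hb hD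
  have hPPp : P = Pp r b D 0 := by
    rw [hP]; unfold Pp; rw [Polynomial.C_0, zero_mul, add_zero]
  have hPkPp : ∀ k : ℕ, Pk k = Pp r b D (((2 * (k : ℝ) - 1) ^ 2)⁻¹) := fun k => hPk k
  -- locate the roots of P
  have hex0 : ∀ m, ∃ x ∈ J r b D m, (Pp r b D 0).IsRoot x :=
    fun m => exists_root_J hN hr hrm hb hD le_rfl m
  choose ρ0 hρ0J hρ0root using hex0
  have hρ0anti : StrictAnti ρ0 := rho_strictAnti hrm hρ0J
  have hroots0 : (Pp r b D 0).roots = Multiset.map ρ0 Finset.univ.val :=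
    roots_Pp hN hr hrm hb hD le_rfl heps0.le ρ0 (fun m => ⟨hρ0J m, hρ0root m⟩)
  have hmapeq : Multiset.map a Finset.univ.val = Multiset.map ρ0 Finset.univ.val := by
    rw [← haroots, hPPp, hroots0]
  have haρ0 : a = ρ0 := by
    refine label_eq haanti hρ0anti fun x => ?_
    constructor
    · intro ⟨i, hi⟩
      have hmem : x ∈ Multiset.map ρ0 Finset.univ.val := by
        rw [← hmapeq]
        exact Multiset.mem_map.2 ⟨i, (Finset.mem_univ i), hi⟩
      obtain ⟨i', _, hi'⟩ := Multiset.mem_map.1 hmem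
      exact ⟨i', hi'⟩
    · intro ⟨i, hi⟩
      have hmem : x ∈ Multiset.map a Finset.univ.val := by
        rw [hmapeq]
        exact Multiset.mem_map.2 ⟨i, (Finset.mem_univ i), hi⟩
      obtain ⟨i', _, hi'⟩ := Multiset.mem_map.1 hmem
      exact ⟨i', hi'⟩
  have haJ : ∀ j, a j ∈ J r b D j := fun j => by rw [haρ0]; exact hρ0J j
  have haroot : ∀ j, (Pp r b D 0).IsRoot (a j) := fun j => by rw [haρ0]; exact hρ0root j
  have hGa : ∀ j, Gf r b D 0 (a j) = 0 :=
    fun j => Gf_eq_zero_of_root hrm hb (mem_J_ne hrm (haJ j)) (haroot j)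
  -- choose k₀
  obtain ⟨k₀, hk₀1, hk₀⟩ := epsk_lt (eps0 r b D) heps0
  have hεk0 : ∀ k : ℕ, (0 : ℝ) ≤ ((2 * (k : ℝ) - 1) ^ 2)⁻¹ :=
    fun k => inv_nonneg.2 (sq_nonneg _)
  have hεkpos : ∀ k : ℕ, 1 ≤ k → (0 : ℝ) < ((2 * (k : ℝ) - 1) ^ 2)⁻¹ := by
    intro k hk
    have h1 : (1 : ℝ) ≤ (k : ℝ) := by exact_mod_cast hk
    have h2 : (0 : ℝ) < 2 * (k : ℝ) - 1 := by linarith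
    positivity
  have hex : ∀ k : ℕ, k₀ ≤ k → ∀ m, ∃ x, x ∈ J r b D m ∧ (Pk k).IsRoot x := by
    intro k hk m
    obtain ⟨x, hx1, hx2⟩ :=
      exists_root_J (ε := ((2 * (k : ℝ) - 1) ^ 2)⁻¹) hN hr hrm hb hD (hεk0 k) m
    exact ⟨x, hx1, by rw [hPkPp k]; exact hx2⟩
  set A : ℕ → Fin N → ℝ := fun k j => if h : k₀ ≤ k then (hex k h j).choose else a j with hA
  have hAspec : ∀ k : ℕ, k₀ ≤ k → ∀ j, A k j ∈ J r b D j ∧ (Pk k).IsRoot (A k j) := by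
    intro k hk j
    simp only [hA, dif_pos hk]
    exact (hex k hk j).choose_spec
  refine ⟨k₀, hk₀1, A, fun k hk => ?_, fun j => ?_⟩
  · -- properties for fixed k ≥ k₀
    have hJA : ∀ j, A k j ∈ J r b D j := fun j => (hAspec k hk j).1
    have hRA : ∀ j, (Pk k).IsRoot (A k j) := fun j => (hAspec k hk j).2
    refine ⟨fun j => (hJA j).1, ?_, ?_⟩
    · intro j hlt
      have h2 := (hJA ⟨(j : ℕ) + 1, hlt⟩).2
      have huB : uB r b D ⟨(j : ℕ) + 1, hlt⟩ = -(r j) := by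
        unfold uB
        rw [dif_neg (by simp : ¬((⟨(j : ℕ) + 1, hlt⟩ : Fin N) : ℕ) = 0)]
        congr 1
      rwa [huB] at h2
    · have hanti : StrictAnti (A k) := rho_strictAnti hrm hJA
      obtain ⟨z, hz, heq, hnodup⟩ := complex_step N (Pk k)
        (by rw [hPkPp]; exact Pp_ne_zero hN hrm hb)
        (by rw [hPkPp]; exact natDegree_Pp hN (hεkpos k (le_trans hk₀1 hk)).ne')
        (A k) hanti.injective
        (by
          rw [hPkPp]
          refine roots_Pp hN hr hrm hb hD (hεk0 k) (hk₀ k hk).le (A k) fun m => ⟨hJA m, ?_⟩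
          rw [← hPkPp k]
          exact hRA m)
      exact ⟨z.re, z.im, hz, heq, hnodup⟩
  · -- convergence
    rw [Metric.tendsto_atTop]
    intro ε hε
    have hd1 : 0 < a j + r j := by have := (haJ j).1; linarith
    have hd2 : 0 < uB r b D j - a j := sub_pos.2 (haJ j).2
    set ε' : ℝ := min ε (min (a j + r j) (uB r b D j - a j)) / 2 with hε'def
    have hε'pos : 0 < ε' := by
      apply div_pos (lt_min hε (lt_min hd1 hd2)) two_pos
    have hε'lt : ε' < ε := by
      have h1 : min ε (min (a j + r j) (uB r b D j - a j)) ≤ ε := min_le_left _ _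
      rw [hε'def]; linarith
    have hε'd1 : ε' < a j + r j := by
      have h1 : min ε (min (a j + r j) (uB r b D j - a j)) ≤ a j + r j :=
        le_trans (min_le_right _ _) (min_le_left _ _)
      rw [hε'def]; linarith
    have hε'd2 : ε' < uB r b D j - a j := by
      have h1 : min ε (min (a j + r j) (uB r b D j - a j)) ≤ uB r b D j - a j :=
        le_trans (min_le_right _ _) (min_le_right _ _)
      rw [hε'def]; linarith
    have hxm : a j - ε' ∈ J r b D j := ⟨by linarith [(haJ j).1], by linarith [(haJ j).2]⟩
    have hxp : a j + ε' ∈ J r b D j := ⟨by linarith [(haJ j).1], by linarith [(haJ j).2]⟩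
    have hGm : kap r b D * ε' ≤ Gf r b D 0 (a j - ε') := by
      have h0 := Gf_anti_J hN hr hrm hb hD le_rfl heps0.le hxm (haJ j) (by linarith)
      rw [hGa j] at h0
      have he : a j - (a j - ε') = ε' := by ring
      rw [he] at h0
      linarith
    have hGp : Gf r b D 0 (a j + ε') ≤ -(kap r b D * ε') := by
      have h0 := Gf_anti_J hN hr hrm hb hD le_rfl heps0.le (haJ j) hxp (by linarith)
      rw [hGa j] at h0
      have he : a j + ε' - a j = ε' := by ring
      rw [he] at h0
      linarith
    obtain ⟨K2, hK21, hK2⟩ := epsk_lt (kap r b D * ε' / (LL r b D ^ 2 + 1)) (by positivity)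
    refine ⟨max k₀ K2, fun k hk => ?_⟩
    have hkk0 : k₀ ≤ k := le_trans (le_max_left _ _) hk
    have hkK2 : K2 ≤ k := le_trans (le_max_right _ _) hk
    have hA' := hAspec k hkk0 j
    have hroot' : (Pp r b D (((2 * (k : ℝ) - 1) ^ 2)⁻¹)).IsRoot (A k j) := by
      rw [← hPkPp k]; exact hA'.2
    have hGA : Gf r b D (((2 * (k : ℝ) - 1) ^ 2)⁻¹) (A k j) = 0 :=
      Gf_eq_zero_of_root hrm hb (mem_J_ne hrm hA'.1) hroot'
    have hεklt := hK2 k hkK2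
    have hεk0' := hεk0 k
    have hεkle := (hk₀ k hkk0).le
    have hGdiff : ∀ x : ℝ, Gf r b D (((2 * (k : ℝ) - 1) ^ 2)⁻¹) x
        = Gf r b D 0 x - ((2 * (k : ℝ) - 1) ^ 2)⁻¹ * x ^ 2 := by
      intro x; unfold Gf; ring
    have hsq : ∀ x : ℝ, x ∈ J r b D j →
        ((2 * (k : ℝ) - 1) ^ 2)⁻¹ * x ^ 2 < kap r b D * ε' := by
      intro x hx
      have habs := mem_J_abs hr hrm hb hD hx
      have hx2 : x ^ 2 ≤ LL r b D ^ 2 := by nlinarith [abs_nonneg x, _root_.sq_abs x]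
      have hc1 : ((2 * (k : ℝ) - 1) ^ 2)⁻¹ * x ^ 2
          ≤ ((2 * (k : ℝ) - 1) ^ 2)⁻¹ * LL r b D ^ 2 :=
        mul_le_mul_of_nonneg_left hx2 hεk0'
      have hc2 : ((2 * (k : ℝ) - 1) ^ 2)⁻¹ * LL r b D ^ 2
          ≤ (kap r b D * ε' / (LL r b D ^ 2 + 1)) * LL r b D ^ 2 :=
        mul_le_mul_of_nonneg_right hεklt.le (by positivity)
      have hc3 : (kap r b D * ε' / (LL r b D ^ 2 + 1)) * LL r b D ^ 2 < kap r b D * ε' := by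
        rw [div_mul_eq_mul_div, div_lt_iff₀ (by positivity : (0:ℝ) < LL r b D ^ 2 + 1)]
        nlinarith [mul_pos hkappos hε'pos]
      linarith
    have hGmk : 0 < Gf r b D (((2 * (k : ℝ) - 1) ^ 2)⁻¹) (a j - ε') := by
      rw [hGdiff]
      have := hsq _ hxm
      linarith
    have hGpk : Gf r b D (((2 * (k : ℝ) - 1) ^ 2)⁻¹) (a j + ε') < 0 := by
      rw [hGdiff]
      have h1 : 0 ≤ ((2 * (k : ℝ) - 1) ^ 2)⁻¹ * (a j + ε') ^ 2 :=
        mul_nonneg hεk0' (sq_nonneg _)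
      nlinarith [mul_pos hkappos hε'pos]
    have hlow : a j - ε' < A k j := by
      rcases lt_trichotomy (A k j) (a j - ε') with h | h | h
      · exfalso
        have h0 := Gf_anti_J hN hr hrm hb hD hεk0' hεkle hA'.1 hxm h
        rw [hGA] at h0
        nlinarith [mul_pos hkappos (by linarith : (0:ℝ) < (a j - ε') - A k j)]
      · exfalso
        rw [h] at hGA
        linarith
      · exact h
    have hhigh : A k j < a j + ε' := by
      rcases lt_trichotomy (A k j) (a j + ε') with h | h | h
      · exact h
      · exfalso
        rw [h] at hGA
        linarith
      · exfalso
        have h0 := Gf_anti_J hN hr hrm hb hD hεk0' hεkle hxp hA'.1 h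
        rw [hGA] at h0
        nlinarith [mul_pos hkappos (by linarith : (0:ℝ) < A k j - (a j + ε'))]
    have habs : |A k j - a j| < ε' := abs_lt.2 ⟨by linarith, by linarith⟩
    rw [Real.dist_eq]
    linarith
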